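/- For all natural numbers n ≥ 1 and m ≥ 3, there exists a dominating broadcast on the sunlet graph with degree n, S_m^n, that has exactly one broadcast vertex, this vertex is a base vertex, its strength is ⌊m/2⌋ + n, and the cost of the broadcast equals the radius of S_m^n. -/

import Mathlib

open SimpleGraph Finset
open scoped Fin.NatCast Fin.CommRing

/-- A dominating broadcast on `G`: every vertex is within distance `f u` of some
vertex `u` with `f u ≥ 1` (distances are measured by the graph metric `G.dist`). -/
def IsDominatingBroadcast {V : Type*} (G : SimpleGraph V) (f : V → ℕ) : Prop :=
  ∀ v : V, ∃ u : V, 1 ≤ f u ∧ G.dist u v ≤ f u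

/-- The sunlet graph with degree `n` on the cycle `C_m`, `S_m^n`: a path on `n`
new vertices (a branch) is attached to each vertex of the cycle `C_m`.
The vertex `(i, 0)` is the `i`-th base vertex (on the cycle) and, for
`1 ≤ j ≤ n`, the vertex `(i, j)` is the `j`-th pendant vertex of the branch
attached at `(i, 0)`. -/
def sunletDeg (m n : ℕ) : SimpleGraph (Fin m × Fin (n + 1)) :=
  SimpleGraph.fromRel (fun a b =>
    (a.2 = 0 ∧ b.2 = 0 ∧ (SimpleGraph.cycleGraph m).Adj a.1 b.1) ∨
    (a.1 = b.1 ∧ (a.2 : ℕ) + 1 = (b.2 : ℕ)))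

/-- The eccentricity of a vertex: the maximum distance from `v` to any vertex. -/
noncomputable def eccentricity {V : Type*} [Fintype V] (G : SimpleGraph V) (v : V) : ℕ :=
  Finset.univ.sup fun u => G.dist u v

/-- The radius of a graph: the minimum eccentricity over all vertices. -/
noncomputable def graphRadius (V : Type*) [Fintype V] (G : SimpleGraph V) : ℕ :=
  sInf {e : ℕ | ∃ v : V, eccentricity G v = e}

section Aux

variable {m n : ℕ}

private lemma fin_sub_val' (x y : Fin m) :
    (y.val ≤ x.val ∧ (x - y).val = x.val - y.val) ∨
    (x.val < y.val ∧ (x - y).val = x.val + m - y.val) := by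
  have hx := x.isLt; have hy := y.isLt
  rw [Fin.sub_def]
  rcases le_or_gt y.val x.val with h | h
  · left
    refine ⟨h, ?_⟩
    simp only
    have he : m - y.val + x.val = m + (x.val - y.val) := by omega
    rw [he, Nat.add_mod_left, Nat.mod_eq_of_lt (by omega)]
  · right
    refine ⟨h, ?_⟩
    simp only
    have he : m - y.val + x.val = x.val + m - y.val := by omega
    rw [he, Nat.mod_eq_of_lt (by omega)]

private lemma fin_step_val [NeZero m] (hm : 2 ≤ m) (z : Fin m) :
    (z.val + 1 = m ∧ (z + 1).val = 0) ∨ (z.val + 1 < m ∧ (z + 1).val = z.val + 1) := by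
  have hz := z.isLt
  have hone : (1 : Fin m).val = 1 := by
    rw [Fin.val_one' m]; exact Nat.mod_eq_of_lt (by omega)
  have hadd : (z + 1).val = (z.val + 1) % m := by rw [Fin.val_add, hone]
  rcases eq_or_lt_of_le (show z.val + 1 ≤ m by omega) with h | h
  · left; refine ⟨h, ?_⟩; rw [hadd, h, Nat.mod_self]
  · right; exact ⟨h, by rw [hadd, Nat.mod_eq_of_lt h]⟩

/-- cyclic distance from `a` -/
private def dcf (a x : Fin m) : ℕ := min (x - a).val (a - x).val

private lemma dcf_self [NeZero m] (a : Fin m) : dcf a a = 0 := by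
  simp [dcf, sub_self]

private lemma dcf_step [NeZero m] (hm : 2 ≤ m) (a z : Fin m) :
    dcf a (z + 1) ≤ dcf a z + 1 ∧ dcf a z ≤ dcf a (z + 1) + 1 := by
  have ha := a.isLt; have hz := z.isLt; have hz1 := (z + 1).isLt
  have h1 := fin_sub_val' (z + 1) a
  have h2 := fin_sub_val' a (z + 1)
  have h3 := fin_sub_val' z a
  have h4 := fin_sub_val' a z
  have h5 := fin_step_val hm z
  unfold dcf
  omega

end Aux

section Sunlet

variable {m n : ℕ} [NeZero m]

private lemma adj_cyc (hm : 3 ≤ m) (k : Fin m) :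
    (sunletDeg m n).Adj (k, 0) (k + 1, 0) := by
  have hk := k.isLt
  have hs := fin_step_val (m := m) (by omega) k
  have hne : k ≠ k + 1 := by
    intro h
    rw [Fin.ext_iff] at h
    omega
  have hcyc : (SimpleGraph.cycleGraph m).Adj k (k + 1) := by
    refine SimpleGraph.cycleGraph_adj'.mpr (Or.inr ?_)
    rw [add_sub_cancel_left, Fin.val_one' m, Nat.mod_eq_of_lt (by omega)]
  rw [sunletDeg, SimpleGraph.fromRel_adj]
  exact ⟨by simp [hne], Or.inl (Or.inl ⟨rfl, rfl, hcyc⟩)⟩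

omit [NeZero m] in
private lemma adj_branch (i : Fin m) (j : Fin n) :
    (sunletDeg m n).Adj (i, j.castSucc) (i, j.succ) := by
  have h : (j.castSucc : ℕ) + 1 = (j.succ : ℕ) := by simp
  rw [sunletDeg, SimpleGraph.fromRel_adj]
  refine ⟨?_, Or.inl (Or.inr ⟨rfl, h⟩)⟩

  simp only [ne_eq, Prod.mk.injEq, not_and]
  intro _ hc
  rw [Fin.ext_iff] at hc
  omega

private lemma cyc_walk (hm : 3 ≤ m) (a : Fin m) (k : ℕ) :
    ∃ w : (sunletDeg m n).Walk (a, 0) (a + (k : Fin m), 0), w.length = k := by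
  induction k generalizing a with
  | zero => exact ⟨Walk.nil.copy rfl (by simp), by simp⟩
  | succ k ih =>
    obtain ⟨w, hw⟩ := ih (a + 1)
    have h' : a + 1 + (k : Fin m) = a + ((k + 1 : ℕ) : Fin m) := by push_cast; ring
    have he : ((a + 1 + (k : Fin m), (0 : Fin (n+1)))) = (a + ((k + 1 : ℕ) : Fin m), 0) := by
      rw [h']
    exact ⟨((Walk.cons (adj_cyc hm a) w).copy rfl he), by simp [hw]⟩

omit [NeZero m] in
private lemma branch_walk (i : Fin m) (j : Fin (n + 1)) :
    ∃ w : (sunletDeg m n).Walk (i, j) (i, 0), w.length = j.val := by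
  induction j using Fin.induction with
  | zero => exact ⟨Walk.nil, rfl⟩
  | succ j ih =>
    obtain ⟨w, hw⟩ := ih
    exact ⟨Walk.cons (adj_branch i j).symm w, by simp [hw]⟩

private lemma to_base (hm : 3 ≤ m) (v : Fin m × Fin (n + 1)) :
    ∃ w : (sunletDeg m n).Walk v (((0 : Fin m), 0)), w.length ≤ m / 2 + n := by
  obtain ⟨i, j⟩ := v
  obtain ⟨w1, hw1⟩ := branch_walk i j
  have hj : j.val ≤ n := by omega
  rcases le_or_gt i.val (m / 2) with hc | hc
  · obtain ⟨w2, hw2⟩ := cyc_walk (n := n) hm 0 i.val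
    refine ⟨w1.append ((w2.copy rfl (by simp)).reverse), ?_⟩
    rw [Walk.length_append, Walk.length_reverse, Walk.length_copy, hw1, hw2]
    omega
  · obtain ⟨w2, hw2⟩ := cyc_walk (n := n) hm i (m - i.val)
    have hi := i.isLt
    have he : i + ((m - i.val : ℕ) : Fin m) = 0 := by
      have h1 : ((m - i.val : ℕ) : Fin m) + ((i.val : ℕ) : Fin m)
          = ((m - i.val + i.val : ℕ) : Fin m) := by push_cast; ring
      rw [show m - i.val + i.val = m by omega, Fin.natCast_self, Fin.cast_val_eq_self] at h1
      rw [add_comm, h1]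
    refine ⟨w1.append (w2.copy rfl (by rw [he])), ?_⟩
    rw [Walk.length_append, Walk.length_copy, hw1, hw2]
    omega

private lemma lip_walk {V : Type*} {G : SimpleGraph V} (g : V → ℕ)
    (hg : ∀ a b, G.Adj a b → g a ≤ g b + 1) {a b : V} (w : G.Walk a b) :
    g a ≤ g b + w.length := by
  induction w with
  | nil => simp
  | cons h p ih => have := hg _ _ h; simp only [Walk.length_cons]; omega

end Sunlet

theorem sunletDeg_exists_single_broadcast (m n : ℕ) (hm : 3 ≤ m) (hn : 1 ≤ n) :
    ∃ f : Fin m × Fin (n + 1) → ℕ,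
      IsDominatingBroadcast (sunletDeg m n) f ∧
      ∃ v : Fin m × Fin (n + 1),
        (∀ u : Fin m × Fin (n + 1), 1 ≤ f u ↔ u = v) ∧
        v.2 = 0 ∧ f v = m / 2 + n ∧
        ∑ u, f u = graphRadius (Fin m × Fin (n + 1)) (sunletDeg m n) := by
  haveI : NeZero m := ⟨by omega⟩
  set c := m / 2 with hc
  have hc1 : 1 ≤ c := by omega
  have hcm : 2 * c ≤ m := by omega
  set G := sunletDeg m n with hG
  set v0 : Fin m × Fin (n + 1) := ((0 : Fin m), 0) with hv0
  have hdist : ∀ v, G.dist v v0 ≤ c + n := by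
    intro v
    obtain ⟨w, hw⟩ := to_base hm v
    exact le_trans (SimpleGraph.dist_le w) hw
  have hreach : ∀ v, G.Reachable v v0 := fun v => (to_base hm v).choose.reachable
  have hlow : ∀ v, c + n ≤ eccentricity G v := by
    intro v
    obtain ⟨i, j⟩ := v
    set a : Fin m := i + (c : Fin m) with ha
    have hcv : ((c : Fin m)).val = c := Fin.val_cast_of_lt (by omega)
    have hia : i ≠ a := by
      intro h
      have h2 : (c : Fin m) = 0 := by
        have := congrArg (fun x => x - i) h
        simp only [sub_self, ha, add_sub_cancel_left] at this
        exact this.symm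
      rw [Fin.ext_iff, hcv, Fin.val_zero] at h2
      omega
    have hdca : dcf a i = c := by
      unfold dcf
      have h1 : i - a = -(c : Fin m) := by rw [ha]; ring
      have h2 : a - i = (c : Fin m) := by rw [ha]; ring
      have h3 : ((-(c : Fin m))).val = m - c := by
        rw [Fin.neg_def]
        simp only [hcv]
        exact Nat.mod_eq_of_lt (by omega)
      rw [h1, h2, hcv, h3]
      omega
    set u : Fin m × Fin (n + 1) := (a, ⟨n, lt_add_one n⟩) with hu
    set g : Fin m × Fin (n + 1) → ℕ :=
      fun p => if p.1 = a then n - p.2.val else dcf a p.1 + n + p.2.val with hgdef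
    have hsym : ∀ x y : Fin m × Fin (n + 1),
        ((x.2 = 0 ∧ y.2 = 0 ∧ (SimpleGraph.cycleGraph m).Adj x.1 y.1) ∨
          (x.1 = y.1 ∧ (x.2 : ℕ) + 1 = (y.2 : ℕ))) →
        g x ≤ g y + 1 ∧ g y ≤ g x + 1 := by
      rintro ⟨x1, x2⟩ ⟨y1, y2⟩ (⟨h1, h2, hadj⟩ | ⟨h1, h2⟩)
      · simp only at h1 h2
        subst h1 h2
        have hne : x1 ≠ y1 := hadj.ne
        have hcyc := SimpleGraph.cycleGraph_adj'.mp hadj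
        have hone : (1 : Fin m).val = 1 := by
          rw [Fin.val_one' m]; exact Nat.mod_eq_of_lt (by omega)
        have hstep : (dcf a x1 ≤ dcf a y1 + 1 ∧ dcf a y1 ≤ dcf a x1 + 1) := by
          rcases hcyc with h | h
          · have hx : x1 = y1 + 1 := by
              have he : x1 - y1 = 1 := by rw [Fin.ext_iff, hone]; exact h
              rw [← he]; ring
            rw [hx]
            exact dcf_step (m := m) (by omega) a y1
          · have hy : y1 = x1 + 1 := by
              have he : y1 - x1 = 1 := by rw [Fin.ext_iff, hone]; exact h
              rw [← he]; ring
            rw [hy]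
            have hst := dcf_step (m := m) (by omega) a x1
            exact ⟨hst.2, hst.1⟩
        have hda := dcf_self (m := m) a
        simp only [hgdef]
        split_ifs with e1 e2 e2
        · exact absurd (e1.trans e2.symm) hne
        · have h0 : dcf a x1 = 0 := by rw [e1]; exact hda
          simp only [Fin.val_zero]; omega
        · have h0 : dcf a y1 = 0 := by rw [e2]; exact hda
          simp only [Fin.val_zero]; omega
        · simp only [Fin.val_zero]; omega
      · simp only at h1 h2
        subst h1
        have hy2 := y2.isLt
        simp only [hgdef]
        split_ifs <;> omega
    have hg : ∀ x y, G.Adj x y → g x ≤ g y + 1 := by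
      intro x y hxy
      rw [hG, sunletDeg, SimpleGraph.fromRel_adj] at hxy
      rcases hxy.2 with h | h
      · exact (hsym x y h).1
      · exact (hsym y x h).2
    have hr : G.Reachable u (i, j) := (hreach u).trans (hreach (i, j)).symm
    obtain ⟨w, hw⟩ := hr.exists_walk_length_eq_dist
    have hlip := lip_walk g hg w.reverse
    rw [SimpleGraph.Walk.length_reverse, hw] at hlip
    have hgu : g u = 0 := by simp [hgdef, hu]
    have hgv : c + n ≤ g (i, j) := by
      simp only [hgdef]
      rw [if_neg hia, hdca]
      omega
    have hle : c + n ≤ G.dist u (i, j) := by omega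
    unfold eccentricity
    exact le_trans hle (Finset.le_sup (f := fun x => G.dist x (i, j)) (Finset.mem_univ u))
  have hecc0 : eccentricity G v0 = c + n := by
    refine le_antisymm ?_ (hlow v0)
    unfold eccentricity
    exact Finset.sup_le fun u _ => hdist u
  have hrad : graphRadius (Fin m × Fin (n + 1)) G = c + n := by
    have hmem : c + n ∈ {e : ℕ | ∃ v : Fin m × Fin (n + 1), eccentricity G v = e} :=
      ⟨v0, hecc0⟩
    unfold graphRadius
    refine le_antisymm (Nat.sInf_le hmem) ?_
    have hne : {e : ℕ | ∃ v : Fin m × Fin (n + 1), eccentricity G v = e}.Nonempty := ⟨_, hmem⟩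
    obtain ⟨v, hv⟩ := Nat.sInf_mem hne
    rw [← hv]
    exact hlow v
  refine ⟨fun u => if u = v0 then c + n else 0, ?_, v0, ?_, rfl, ?_, ?_⟩
  · intro v
    refine ⟨v0, ?_, ?_⟩
    · show (1 : ℕ) ≤ if v0 = v0 then c + n else 0
      rw [if_pos rfl]; omega
    · show G.dist v0 v ≤ if v0 = v0 then c + n else 0
      rw [if_pos rfl, SimpleGraph.dist_comm]
      exact hdist v
  · intro u
    constructor
    · intro h
      by_contra hne
      simp only [if_neg hne] at h
      omega
    · intro h
      show (1 : ℕ) ≤ if u = v0 then c + n else 0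
      rw [if_pos h]; omega
  · show (if v0 = v0 then c + n else 0) = m / 2 + n
    rw [if_pos rfl]
  · rw [hrad, Finset.sum_ite_eq' Finset.univ v0 (fun _ => c + n),
      if_pos (Finset.mem_univ v0)]
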